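/- Let W : ℝ → ℝ be twice continuously differentiable with W(1) = W(−1) = 0 and W′(1) = W′(−1) = 0. Then there exists a constant C > 0, depending only on W, with the following property: for every finite measure space (M, μ), every measurable u : M → ℝ with |u| ≤ 1 a.e. on M, every measurable set K ⊆ M such that u ∈ {−1, 1} a.e. on M ∖ K, every m ∈ [0, 1], and every real c with |c| ≤ m, one has ∫_M |W(u − c) − W(u)| dμ ≤ C (m² μ(M) + m μ(K)). -/

import Mathlib

open MeasureTheory Set

/-- **Potential-energy cost of shifting a phase field by a constant.**
If `W` is `C²` with nondegenerate zeros at `±1` (`W(±1) = 0`, `W'(±1) = 0`),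
there is `C > 0` such that for every finite measure space, every `u` with
`|u| ≤ 1` a.e. and `u ∈ {-1,1}` a.e. off a set `K`, every `m ∈ [0,1]` and every
`c` with `|c| ≤ m`, one has `∫ |W(u - c) - W(u)| ≤ C (m² μ(M) + m μ(K))`. -/
theorem potential_shift_estimate
    (W : ℝ → ℝ) (hW : ContDiff ℝ 2 W)
    (hW1 : W 1 = 0) (hWm1 : W (-1) = 0)
    (hW1' : deriv W 1 = 0) (hWm1' : deriv W (-1) = 0) :
    ∃ C > (0 : ℝ),
      ∀ (M : Type) (mM : MeasurableSpace M) (μ : Measure M), IsFiniteMeasure μ →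
        ∀ u : M → ℝ, Measurable u → (∀ᵐ x ∂μ, |u x| ≤ 1) →
          ∀ K : Set M, MeasurableSet K →
            (∀ᵐ x ∂μ, x ∉ K → u x = -1 ∨ u x = 1) →
            ∀ m ∈ Set.Icc (0 : ℝ) 1, ∀ c : ℝ, |c| ≤ m →
              (∫ x, |W (u x - c) - W (u x)| ∂μ) ≤
                C * (m ^ 2 * (μ Set.univ).toReal + m * (μ K).toReal) := by
  classical
  -- Regularity of `W`
  have h2 : ContDiff ℝ (1 + 1 : ℕ) W := by exact_mod_cast hW
  have h1 : ContDiff ℝ (1 : ℕ) (deriv W) := (contDiff_succ_iff_deriv.mp h2).2.2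
  have h1' : ContDiff ℝ ((0 : ℕ) + 1) (deriv W) := by exact_mod_cast h1
  have hWdiff : Differentiable ℝ W := h2.differentiable (by simp)
  have hW'diff : Differentiable ℝ (deriv W) := h1.differentiable (by simp)
  have hW'cont : Continuous (deriv W) := hW'diff.continuous
  have hW''cont : Continuous (deriv (deriv W)) :=
    ((contDiff_succ_iff_deriv.mp h1').2.2).continuous
  -- Bounds on derivatives on `[-2, 2]`
  have hcpt : IsCompact (Icc (-2 : ℝ) 2) := isCompact_Icc
  obtain ⟨L₀, hL₀⟩ := hcpt.exists_bound_of_continuousOn hW'cont.continuousOn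
  obtain ⟨Q₀, hQ₀⟩ := hcpt.exists_bound_of_continuousOn hW''cont.continuousOn
  set L : ℝ := max L₀ 0 with hLdef
  set Q : ℝ := max Q₀ 0 with hQdef
  have hL0 : 0 ≤ L := le_max_right _ _
  have hQ0 : 0 ≤ Q := le_max_right _ _
  have hLb : ∀ t ∈ Icc (-2 : ℝ) 2, ‖deriv W t‖ ≤ L :=
    fun t ht => (hL₀ t ht).trans (le_max_left _ _)
  have hQb : ∀ t ∈ Icc (-2 : ℝ) 2, ‖deriv (deriv W) t‖ ≤ Q :=
    fun t ht => (hQ₀ t ht).trans (le_max_left _ _)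
  -- Lipschitz bound for `W` on `[-2,2]`
  have hLip : ∀ x ∈ Icc (-2 : ℝ) 2, ∀ y ∈ Icc (-2 : ℝ) 2, |W y - W x| ≤ L * |y - x| := by
    intro x hx y hy
    have := Convex.norm_image_sub_le_of_norm_deriv_le
      (f := W) (s := Icc (-2 : ℝ) 2)
      (fun t _ => hWdiff t) hLb (convex_Icc _ _) hx hy
    simpa [Real.norm_eq_abs] using this
  -- Lipschitz bound for `deriv W` on `[-2,2]`
  have hLip' : ∀ x ∈ Icc (-2 : ℝ) 2, ∀ y ∈ Icc (-2 : ℝ) 2,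
      |deriv W y - deriv W x| ≤ Q * |y - x| := by
    intro x hx y hy
    have := Convex.norm_image_sub_le_of_norm_deriv_le
      (f := deriv W) (s := Icc (-2 : ℝ) 2)
      (fun t _ => hW'diff t) hQb (convex_Icc _ _) hx hy
    simpa [Real.norm_eq_abs] using this
  -- Taylor-type bound near `±1`
  have hTaylor : ∀ c : ℝ, |c| ≤ 1 → ∀ a : ℝ, (a = -1 ∨ a = 1) →
      |W (a - c) - W a| ≤ Q * c ^ 2 := by
    intro c hc a ha
    have ha1 : |a| = 1 := by rcases ha with h | h <;> simp [h]
    have hderiva : deriv W a = 0 := by rcases ha with h | h <;> simp [h, hW1', hWm1']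
    set s : Set ℝ := Icc (a - |c|) (a + |c|) with hsdef
    have hs2 : s ⊆ Icc (-2 : ℝ) 2 := by
      intro t ht
      rcases ht with ⟨ht1, ht2⟩
      have h1 : -2 ≤ a - |c| := by
        have := abs_le.mp ha1.le; nlinarith [abs_nonneg a, abs_le.mp (le_of_eq ha1), hc]
      have h2 : a + |c| ≤ 2 := by
        have := abs_le.mp (le_of_eq ha1); nlinarith [hc]
      exact ⟨le_trans h1 ht1, le_trans ht2 h2⟩
    have hderivb : ∀ t ∈ s, ‖deriv W t‖ ≤ Q * |c| := by
      intro t ht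
      have h1 : |deriv W t - deriv W a| ≤ Q * |t - a| := by
        refine hLip' a ?_ t (hs2 ht)
        exact hs2 ⟨by linarith [abs_nonneg c], by linarith [abs_nonneg c]⟩
      have h2 : |t - a| ≤ |c| := by
        rcases ht with ⟨ht1, ht2⟩
        rw [abs_le]; constructor <;> linarith
      have := h1.trans (mul_le_mul_of_nonneg_left h2 hQ0)
      simpa [Real.norm_eq_abs, hderiva] using this
    have hmem1 : a - c ∈ s := by
      constructor
      · have := le_abs_self c; linarith
      · have := neg_abs_le c; linarith
    have hmem2 : a ∈ s := ⟨by linarith [abs_nonneg c], by linarith [abs_nonneg c]⟩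
    have := Convex.norm_image_sub_le_of_norm_deriv_le
      (f := W) (s := s)
      (fun t _ => hWdiff t) hderivb (convex_Icc _ _)
      hmem2 hmem1
    have h3 : ‖W (a - c) - W a‖ ≤ Q * |c| * ‖a - c - a‖ := this
    have h4 : ‖a - c - a‖ = |c| := by
      rw [Real.norm_eq_abs]
      have : a - c - a = -c := by ring
      rw [this, abs_neg]
    rw [Real.norm_eq_abs] at h3
    calc |W (a - c) - W a| ≤ Q * |c| * ‖a - c - a‖ := h3
      _ = Q * (|c| * |c|) := by rw [h4]; ring
      _ = Q * c ^ 2 := by rw [← abs_mul, ← sq, abs_sq]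
  -- Choose the constant
  refine ⟨L + Q + 1, by linarith, ?_⟩
  intro M mM μ hfin u hu h1ae K hK hKae m hm c hc
  obtain ⟨hm0, hm1⟩ := hm
  have hc1 : |c| ≤ 1 := hc.trans hm1
  set f : M → ℝ := fun x => |W (u x - c) - W (u x)| with hfdef
  set g : M → ℝ := fun x => Q * m ^ 2 + K.indicator (fun _ => L * m) x with hgdef
  have hfm : AEStronglyMeasurable f μ := by
    apply Measurable.aestronglyMeasurable
    exact ((hW.continuous.measurable.comp (hu.sub_const c)).sub
      (hW.continuous.measurable.comp hu)).abs
  have hg : Integrable g μ :=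
    (integrable_const _).add ((integrable_const _).indicator hK)
  have hle : ∀ᵐ x ∂μ, f x ≤ g x := by
    filter_upwards [h1ae, hKae] with x hx1 hx2
    by_cases hxK : x ∈ K
    · have hux : u x ∈ Icc (-2 : ℝ) 2 := by
        have := abs_le.mp hx1; exact ⟨by linarith, by linarith⟩
      have huxc : u x - c ∈ Icc (-2 : ℝ) 2 := by
        have h := abs_le.mp hx1
        have h' := abs_le.mp hc1
        exact ⟨by linarith, by linarith⟩
      have hb : f x ≤ L * |c| := by
        have := hLip (u x) hux (u x - c) huxc
        simpa [hfdef, abs_sub_comm] using this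
      have : f x ≤ L * m := hb.trans (mul_le_mul_of_nonneg_left hc hL0)
      simp only [hgdef, Set.indicator_of_mem hxK]
      nlinarith [sq_nonneg m]
    · obtain ha := hx2 hxK
      have hb : f x ≤ Q * c ^ 2 := by
        have := hTaylor c hc1 (u x) ha
        simpa [hfdef] using this
      have hc2 : c ^ 2 ≤ m ^ 2 := by
        have := sq_abs c
        nlinarith [abs_nonneg c]
      have : f x ≤ Q * m ^ 2 := hb.trans (mul_le_mul_of_nonneg_left hc2 hQ0)
      simp only [hgdef, Set.indicator_of_notMem hxK]
      linarith
  have hf : Integrable f μ := by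
    refine hg.mono' hfm ?_
    filter_upwards [hle] with x hx
    simpa [Real.norm_eq_abs, hfdef, abs_abs] using hx
  have hint : ∫ x, f x ∂μ ≤ ∫ x, g x ∂μ := integral_mono_ae hf hg hle
  have hgval : ∫ x, g x ∂μ
      = Q * m ^ 2 * (μ Set.univ).toReal + L * m * (μ K).toReal := by
    rw [hgdef]
    rw [integral_add (integrable_const _) ((integrable_const _).indicator hK)]
    rw [integral_const, integral_indicator_const _ hK]
    simp [smul_eq_mul]; simp only [Measure.real]; ring
  rw [hgval] at hint
  refine hint.trans ?_
  have hμU : 0 ≤ (μ Set.univ).toReal := ENNReal.toReal_nonneg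
  have hμK : 0 ≤ (μ K).toReal := ENNReal.toReal_nonneg
  nlinarith [mul_nonneg (mul_nonneg hm0 hm0) hμU, mul_nonneg hm0 hμK,
    mul_nonneg (mul_nonneg hQ0 (mul_nonneg hm0 hm0)) hμU,
    mul_nonneg (mul_nonneg hL0 hm0) hμK, sq_nonneg m]
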